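/- Theorem 2 (stability transfer): Assume the vector DDE setting with F ≡ 0 and the scalar auxiliary setting with F ≡ 0, that the scalar auxiliary DDE has exactly one solution on [t₀,∞) for each continuous nonnegative history, and that the trivial solution of the scalar auxiliary DDE is stable: for every ε > 0 there exists δ > 0 such that every solution y of the scalar auxiliary DDE with continuous nonnegative history ψ satisfying sup_{s ∈ [t₀−h̄,t₀]} ψ s < δ satisfies y t < ε for all t ≥ t₀. Then the trivial solution of the vector DDE is stable: for every ε > 0 there exists δ > 0 such that every solution x of the vector DDE with continuous history φ satisfying sup_{s ∈ [t₀−h̄,t₀]} ‖φ s‖ < δ satisfies ‖x t‖ < ε for all t ≥ t₀. -/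

import Mathlib

open MeasureTheory Filter Topology Matrix
open scoped Matrix.Norms.L2Operator

noncomputable section

/-- `M *ᵥ v`, viewed as an element of Euclidean space. -/
def Matrix.mulVecE {n : ℕ} (M : Matrix (Fin n) (Fin n) ℝ) (v : EuclideanSpace ℝ (Fin n)) :
    EuclideanSpace ℝ (Fin n) :=
  WithLp.toLp 2 (M.mulVec v)

/-- `x` is a solution of the vector DDE
`x'(t) = A t *ᵥ x t + f t (fun i => x (t - H i t)) + F t` for `t ≥ t₀`,
with continuous history `φ` on `[t₀ - hb, t₀]`. -/
def IsVectorDDESol (n m : ℕ) (t₀ hb : ℝ) (H : Fin (m + 1) → ℝ → ℝ)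
    (A : ℝ → Matrix (Fin n) (Fin n) ℝ)
    (f : ℝ → (Fin (m + 1) → EuclideanSpace ℝ (Fin n)) → EuclideanSpace ℝ (Fin n))
    (F : ℝ → EuclideanSpace ℝ (Fin n))
    (φ x : ℝ → EuclideanSpace ℝ (Fin n)) : Prop :=
  Continuous x ∧ (∀ t ∈ Set.Icc (t₀ - hb) t₀, x t = φ t) ∧
    ∀ t ≥ t₀, HasDerivAt x ((A t).mulVecE (x t) + f t (fun i => x (t - H i t)) + F t) t

/-- `y` is a solution of the scalar auxiliary DDE
`y'(t) = p t * y t + c t * (L t (fun i => y (t - H i t)) + G t)` for `t ≥ t₀`,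
with history `ψ` on `[t₀ - hb, t₀]`. -/
def IsScalarDDESol (m : ℕ) (t₀ hb : ℝ) (H : Fin (m + 1) → ℝ → ℝ)
    (p c : ℝ → ℝ) (L : ℝ → (Fin (m + 1) → ℝ) → ℝ) (G : ℝ → ℝ)
    (ψ y : ℝ → ℝ) : Prop :=
  Continuous y ∧ (∀ t ∈ Set.Icc (t₀ - hb) t₀, y t = ψ t) ∧
    ∀ t ≥ t₀, HasDerivAt y (p t * y t + c t * (L t (fun i => y (t - H i t)) + G t)) t

section Aux

lemma aux_hasDerivAt_inv {n : ℕ} (A w : ℝ → Matrix (Fin n) (Fin n) ℝ)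
    (hwUnit : ∀ t, IsUnit (w t)) (hw' : ∀ t, HasDerivAt w (A t * w t) t) (t : ℝ) :
    HasDerivAt (fun s => (w s)⁻¹) (-((w t)⁻¹ * A t)) t := by
  haveI : CompleteSpace (Matrix (Fin n) (Fin n) ℝ) := FiniteDimensional.complete ℝ _
  obtain ⟨u, hu⟩ := hwUnit t
  have h1 : HasFDerivAt Ring.inverse
      (-ContinuousLinearMap.mulLeftRight ℝ _ (↑u⁻¹) (↑u⁻¹)) (w t) := by
    rw [← hu]; exact hasFDerivAt_ringInverse u
  have h2 := h1.comp_hasDerivAt t (hw' t)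
  have h3 : (fun s => Ring.inverse (w s)) = fun s => (w s)⁻¹ := by
    funext s; rw [Matrix.nonsing_inv_eq_ringInverse]
  rw [Function.comp_def, h3] at h2
  refine h2.congr_deriv ?_
  symm
  have hui : (↑u⁻¹ : Matrix (Fin n) (Fin n) ℝ) = (w t)⁻¹ := by
    rw [← hu, ← Matrix.coe_units_inv]
  have hdet : IsUnit (w t).det := (Matrix.isUnit_iff_isUnit_det _).mp ⟨u, hu⟩
  simp only [ContinuousLinearMap.neg_apply, ContinuousLinearMap.mulLeftRight_apply, hui]
  rw [neg_inj]
  calc (w t)⁻¹ * A t = (w t)⁻¹ * A t * ((w t) * (w t)⁻¹) := by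
        rw [Matrix.mul_nonsing_inv _ hdet, mul_one]
    _ = (w t)⁻¹ * (A t * w t) * (w t)⁻¹ := by simp only [mul_assoc]

/-- `mulVecE` as a continuous linear map in both arguments. -/
def matCLM (n : ℕ) : Matrix (Fin n) (Fin n) ℝ →L[ℝ]
    (EuclideanSpace ℝ (Fin n) →L[ℝ] EuclideanSpace ℝ (Fin n)) :=
  LinearMap.toContinuousLinearMap
    { toFun := fun M => Matrix.toEuclideanCLM (𝕜 := ℝ) M
      map_add' := fun M N => by simp
      map_smul' := fun r M => by simp }

lemma matCLM_apply {n : ℕ} (M : Matrix (Fin n) (Fin n) ℝ) (v : EuclideanSpace ℝ (Fin n)) :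
    matCLM n M v = M.mulVecE v := rfl

lemma matCLM_mul {n : ℕ} (M N : Matrix (Fin n) (Fin n) ℝ) :
    matCLM n (M * N) = (matCLM n M).comp (matCLM n N) := by
  simp only [matCLM, LinearMap.coe_toContinuousLinearMap', LinearMap.coe_mk, AddHom.coe_mk]
  exact map_mul (Matrix.toEuclideanCLM (𝕜 := ℝ)) M N

lemma matCLM_one {n : ℕ} : matCLM n 1 = ContinuousLinearMap.id ℝ _ := by
  simp only [matCLM, LinearMap.coe_toContinuousLinearMap', LinearMap.coe_mk, AddHom.coe_mk]
  exact map_one (Matrix.toEuclideanCLM (𝕜 := ℝ))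

lemma matCLM_norm_apply_le {n : ℕ} (M : Matrix (Fin n) (Fin n) ℝ)
    (v : EuclideanSpace ℝ (Fin n)) : ‖matCLM n M v‖ ≤ ‖M‖ * ‖v‖ := by
  rw [matCLM_apply]; exact Matrix.l2_opNorm_mulVec M v

end Aux

/-- Theorem 2 (stability transfer): stability of the trivial solution of the scalar
auxiliary DDE implies stability of the trivial solution of the vector DDE. -/
theorem thm2_stability_transfer
    (n m : ℕ) (hn : 0 < n) (t₀ hb : ℝ) (hhb : 0 < hb)
    (H : Fin (m + 1) → ℝ → ℝ) (hHcont : ∀ i, Continuous (H i))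
    (hH0 : ∀ t, H 0 t = 0) (hHnonneg : ∀ i t, 0 ≤ H i t) (hHle : ∀ i t, H i t ≤ hb)
    (A : ℝ → Matrix (Fin n) (Fin n) ℝ) (hA : Continuous A)
    (f : ℝ → (Fin (m + 1) → EuclideanSpace ℝ (Fin n)) → EuclideanSpace ℝ (Fin n))
    (hf : Continuous fun q : ℝ × (Fin (m + 1) → EuclideanSpace ℝ (Fin n)) => f q.1 q.2)
    (hf0 : ∀ t, f t 0 = 0)
    (F : ℝ → EuclideanSpace ℝ (Fin n)) (hF : Continuous F)
    (hF0 : ∀ t, F t = 0)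
    (w : ℝ → Matrix (Fin n) (Fin n) ℝ)
    (hw₀ : w t₀ = 1) (hwUnit : ∀ t, IsUnit (w t))
    (hw' : ∀ t, HasDerivAt w (A t * w t) t)
    (p : ℝ → ℝ) (hp : Continuous p)
    (hwp : ∀ t ≥ t₀, ‖w t‖ = Real.exp (∫ s in t₀..t, p s))
    (c : ℝ → ℝ) (hc : ∀ t, c t = ‖w t‖ * ‖(w t)⁻¹‖)
    (L : ℝ → (Fin (m + 1) → ℝ) → ℝ)
    (hL : Continuous fun q : ℝ × (Fin (m + 1) → ℝ) => L q.1 q.2)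
    (hL0 : ∀ t, L t 0 = 0)
    (hLnonneg : ∀ t ζ, 0 ≤ L t ζ)
    (hLmono : ∀ t ζ ζ', (∀ i, ζ i ≤ ζ' i) → L t ζ ≤ L t ζ')
    (hLf : ∀ t ≥ t₀, ∀ χ : Fin (m + 1) → EuclideanSpace ℝ (Fin n),
      ‖f t χ‖ ≤ L t fun i => ‖χ i‖)
    (hexist : ∀ ψ : ℝ → ℝ, Continuous ψ → (∀ s ∈ Set.Icc (t₀ - hb) t₀, 0 ≤ ψ s) →
      ∃ y : ℝ → ℝ, IsScalarDDESol m t₀ hb H p c L (fun t => ‖F t‖) ψ y)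
    (huniq : ∀ ψ : ℝ → ℝ, Continuous ψ → (∀ s ∈ Set.Icc (t₀ - hb) t₀, 0 ≤ ψ s) →
      ∀ y₁ y₂ : ℝ → ℝ, IsScalarDDESol m t₀ hb H p c L (fun t => ‖F t‖) ψ y₁ →
        IsScalarDDESol m t₀ hb H p c L (fun t => ‖F t‖) ψ y₂ → ∀ t ≥ t₀, y₁ t = y₂ t)
    (hstab : ∀ ε > (0:ℝ), ∃ δ > (0:ℝ), ∀ ψ y : ℝ → ℝ, Continuous ψ →
      (∀ s ∈ Set.Icc (t₀ - hb) t₀, 0 ≤ ψ s) →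
      sSup (ψ '' Set.Icc (t₀ - hb) t₀) < δ →
      IsScalarDDESol m t₀ hb H p c L (fun t => ‖F t‖) ψ y → ∀ t ≥ t₀, y t < ε) :
    ∀ ε > (0:ℝ), ∃ δ > (0:ℝ), ∀ (φ x : ℝ → EuclideanSpace ℝ (Fin n)), Continuous φ →
      sSup ((fun s => ‖φ s‖) '' Set.Icc (t₀ - hb) t₀) < δ →
      IsVectorDDESol n m t₀ hb H A f F φ x → ∀ t ≥ t₀, ‖x t‖ < ε := by
  haveI : CompleteSpace (Matrix (Fin n) (Fin n) ℝ) := FiniteDimensional.complete ℝ _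
  intro ε hε
  obtain ⟨δ, hδ, hst⟩ := hstab ε hε
  refine ⟨δ / 2, by positivity, ?_⟩
  intro φ x hφ hsup hsol
  obtain ⟨hxc, hxhist, hx'⟩ := hsol
  have ht₀I : t₀ ∈ Set.Icc (t₀ - hb) t₀ := ⟨by linarith, le_refl _⟩
  have hbdd : BddAbove ((fun s => ‖φ s‖) '' Set.Icc (t₀ - hb) t₀) :=
    (isCompact_Icc.image (hφ.norm)).bddAbove
  have hφle : ∀ s ∈ Set.Icc (t₀ - hb) t₀,
      ‖φ s‖ ≤ sSup ((fun s => ‖φ s‖) '' Set.Icc (t₀ - hb) t₀) :=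
    fun s hs => le_csSup hbdd ⟨s, hs, rfl⟩
  set ψ : ℝ → ℝ := fun s => ‖φ s‖ + δ / 2 with hψdef
  have hψc : Continuous ψ := (hφ.norm).add continuous_const
  have hψnn : ∀ s ∈ Set.Icc (t₀ - hb) t₀, 0 ≤ ψ s := fun s _ => by positivity
  obtain ⟨y, hy⟩ := hexist ψ hψc hψnn
  obtain ⟨hyc, hyhist, hy'⟩ := hy
  have hψsup : sSup (ψ '' Set.Icc (t₀ - hb) t₀) < δ := by
    have h0M : 0 ≤ sSup ((fun s => ‖φ s‖) '' Set.Icc (t₀ - hb) t₀) :=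
      le_trans (norm_nonneg _) (hφle t₀ ht₀I)
    have h1 : sSup (ψ '' Set.Icc (t₀ - hb) t₀) ≤
        sSup ((fun s => ‖φ s‖) '' Set.Icc (t₀ - hb) t₀) + δ / 2 := by
      apply Real.sSup_le
      · rintro z ⟨s, hs, rfl⟩
        exact add_le_add_left (hφle s hs) _
      · positivity
    linarith
  have hyε : ∀ t ≥ t₀, y t < ε := hst ψ y hψc hψnn hψsup ⟨hyc, hyhist, hy'⟩
  -- basic continuity facts
  set z : ℝ → Matrix (Fin n) (Fin n) ℝ := fun s => (w s)⁻¹ with hzdef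
  have hz' : ∀ t, HasDerivAt z (-(z t * A t)) t := aux_hasDerivAt_inv A w hwUnit hw'
  have hzc : Continuous z := continuous_iff_continuousAt.2 fun t => (hz' t).continuousAt
  have hwc : Continuous w := continuous_iff_continuousAt.2 fun t => (hw' t).continuousAt
  set g : ℝ → EuclideanSpace ℝ (Fin n) := fun s => f s (fun i => x (s - H i s)) with hgdef
  have hgc : Continuous g := hf.comp (continuous_id.prodMk
    (continuous_pi fun i => hxc.comp (continuous_id.sub (hHcont i))))
  set ℓ : ℝ → ℝ := fun s => L s (fun i => y (s - H i s)) with hℓdef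
  have hℓc : Continuous ℓ := hL.comp (continuous_id.prodMk
    (continuous_pi fun i => hyc.comp (continuous_id.sub (hHcont i))))
  have hcc : Continuous c := by
    have hceq : c = fun t => ‖w t‖ * ‖z t‖ := funext fun t => hc t
    rw [hceq]; exact hwc.norm.mul hzc.norm
  -- variation of constants for x
  set v : ℝ → EuclideanSpace ℝ (Fin n) := fun s => matCLM n (z s) (x s) with hvdef
  have hv' : ∀ s ≥ t₀, HasDerivAt v (matCLM n (z s) (g s)) s := by
    intro s hs
    have h1 : HasDerivAt (fun r => matCLM n (z r)) (matCLM n (-(z s * A s))) s :=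
      (matCLM n).hasFDerivAt.comp_hasDerivAt s (hz' s)
    have h2 := h1.clm_apply (hx' s hs)
    refine h2.congr_deriv ?_
    symm
    rw [hF0, add_zero, map_neg, ContinuousLinearMap.neg_apply, matCLM_mul,
      ContinuousLinearMap.comp_apply, matCLM_apply (A s) (x s), map_add]
    abel
  have hVc : Continuous fun s => matCLM n (z s) (g s) :=
    ((matCLM n).continuous.comp hzc).clm_apply hgc
  have hvt₀ : v t₀ = x t₀ := by
    have : z t₀ = 1 := by rw [hzdef]; simp [hw₀]
    rw [hvdef]; simp only [this, matCLM_one, ContinuousLinearMap.id_apply]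
  have hxv : ∀ s, x s = matCLM n (w s) (v s) := by
    intro s
    have hdet : IsUnit (w s).det := (Matrix.isUnit_iff_isUnit_det _).mp (hwUnit s)
    rw [hvdef]
    simp only [← ContinuousLinearMap.comp_apply, ← matCLM_mul,
      hzdef, Matrix.mul_nonsing_inv _ hdet, matCLM_one, ContinuousLinearMap.id_apply]
  have hx_bound : ∀ τ ≥ t₀,
      ‖x τ‖ ≤ ‖w τ‖ * (‖x t₀‖ + ∫ s in t₀..τ, ‖z s‖ * ‖g s‖) := by
    intro τ hτ
    have hFTC : (∫ s in t₀..τ, matCLM n (z s) (g s)) = v τ - v t₀ :=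
      intervalIntegral.integral_eq_sub_of_hasDerivAt
        (fun s hs => by rw [Set.uIcc_of_le hτ] at hs; exact hv' s hs.1)
        (hVc.intervalIntegrable _ _)
    have hvτ : v τ = v t₀ + ∫ s in t₀..τ, matCLM n (z s) (g s) := by
      rw [hFTC]; abel
    have hnv : ‖v τ‖ ≤ ‖x t₀‖ + ∫ s in t₀..τ, ‖z s‖ * ‖g s‖ := by
      rw [hvτ, hvt₀]
      refine (norm_add_le _ _).trans (add_le_add_right ?_ _)
      refine (intervalIntegral.norm_integral_le_integral_norm hτ).trans ?_
      refine intervalIntegral.integral_mono_on hτ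
        (hVc.norm.intervalIntegrable _ _) ((hzc.norm.mul hgc.norm).intervalIntegrable _ _)
        fun s _ => matCLM_norm_apply_le _ _
    calc ‖x τ‖ = ‖matCLM n (w τ) (v τ)‖ := by rw [← hxv]
      _ ≤ ‖w τ‖ * ‖v τ‖ := matCLM_norm_apply_le _ _
      _ ≤ ‖w τ‖ * (‖x t₀‖ + ∫ s in t₀..τ, ‖z s‖ * ‖g s‖) :=
        mul_le_mul_of_nonneg_left hnv (norm_nonneg _)
  -- variation of constants for y
  set I : ℝ → ℝ := fun t => ∫ s in t₀..t, p s with hIdef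
  have hI' : ∀ t, HasDerivAt I (p t) t := fun t =>
    intervalIntegral.integral_hasDerivAt_right (hp.intervalIntegrable _ _)
      hp.aestronglyMeasurable.stronglyMeasurableAtFilter hp.continuousAt
  have hIc : Continuous I := continuous_iff_continuousAt.2 fun t => (hI' t).continuousAt
  set q : ℝ → ℝ := fun s => Real.exp (-(I s)) * y s with hqdef
  have hq' : ∀ s ≥ t₀, HasDerivAt q (Real.exp (-(I s)) * (c s * ℓ s)) s := by
    intro s hs
    have h1 : HasDerivAt (fun r => Real.exp (-(I r))) (Real.exp (-(I s)) * (-(p s))) s :=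
      (hI' s).neg.exp
    have h2 := h1.mul (hy' s hs)
    refine h2.congr_deriv ?_
    symm
    simp only [hF0, norm_zero, add_zero]
    ring
  have hQc : Continuous fun s => Real.exp (-(I s)) * (c s * ℓ s) :=
    (hIc.neg.rexp).mul (hcc.mul hℓc)
  have hy_eq : ∀ τ ≥ t₀,
      y τ = Real.exp (I τ) * (y t₀ + ∫ s in t₀..τ, Real.exp (-(I s)) * (c s * ℓ s)) := by
    intro τ hτ
    have hFTC : (∫ s in t₀..τ, Real.exp (-(I s)) * (c s * ℓ s)) = q τ - q t₀ :=
      intervalIntegral.integral_eq_sub_of_hasDerivAt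
        (fun s hs => by rw [Set.uIcc_of_le hτ] at hs; exact hq' s hs.1)
        (hQc.intervalIntegrable _ _)
    have hqt₀ : q t₀ = y t₀ := by
      rw [hqdef]; simp [hIdef, intervalIntegral.integral_same]
    have hqτ : q τ = y t₀ + ∫ s in t₀..τ, Real.exp (-(I s)) * (c s * ℓ s) := by
      rw [hFTC, hqt₀]; ring
    have : Real.exp (I τ) * q τ = y τ := by
      rw [hqdef]
      rw [← mul_assoc, ← Real.exp_add, add_neg_cancel, Real.exp_zero, one_mul]
    rw [← this, hqτ]
  have hy_eq2 : ∀ τ ≥ t₀,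
      y τ = Real.exp (I τ) * (y t₀ + ∫ s in t₀..τ, ‖z s‖ * ℓ s) := by
    intro τ hτ
    rw [hy_eq τ hτ]
    congr 1
    congr 1
    refine intervalIntegral.integral_congr fun s hs => ?_
    rw [Set.uIcc_of_le hτ] at hs
    have hws : ‖w s‖ = Real.exp (I s) := hwp s hs.1
    have hzs : ‖z s‖ = ‖(w s)⁻¹‖ := rfl
    rw [hc s, hws, Real.exp_neg, ← hzs, ← mul_assoc, ← mul_assoc,
      inv_mul_cancel₀ (Real.exp_ne_zero _), one_mul]
  -- the comparison argument
  suffices hxy : ∀ t ≥ t₀, ‖x t‖ < y t by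
    exact fun t ht => (hxy t ht).trans (hyε t ht)
  by_contra hcon
  push_neg at hcon
  obtain ⟨τ', hτ'₁, hτ'₂⟩ := hcon
  set S : Set ℝ := {t | t₀ ≤ t ∧ y t ≤ ‖x t‖} with hSdef
  have hSne : S.Nonempty := ⟨τ', hτ'₁, hτ'₂⟩
  have hSbd : BddBelow S := ⟨t₀, fun t ht => ht.1⟩
  have hScl : IsClosed S :=
    (isClosed_le continuous_const continuous_id).inter (isClosed_le hyc hxc.norm)
  set t₁ := sInf S with ht₁def
  have ht₁S : t₁ ∈ S := hScl.csInf_mem hSne hSbd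
  have hhist : ∀ s ∈ Set.Icc (t₀ - hb) t₀, ‖x s‖ < y s := by
    intro s hs
    rw [hxhist s hs, hyhist s hs, hψdef]
    simp only
    linarith
  have ht₀₁ : t₀ < t₁ := by
    rcases lt_or_eq_of_le ht₁S.1 with h | h
    · exact h
    · exfalso; have := hhist t₀ ht₀I; rw [h] at this; exact absurd ht₁S.2 (not_le.2 this)
  have hIco : ∀ s ∈ Set.Ico t₀ t₁, ‖x s‖ < y s := by
    intro s hs
    by_contra h
    push_neg at h
    exact absurd (csInf_le hSbd ⟨hs.1, h⟩) (not_le.2 hs.2)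
  have ht₁le : ‖x t₁‖ ≤ y t₁ := by
    have hten : Tendsto (fun s => y s - ‖x s‖) (𝓝[<] t₁) (𝓝 (y t₁ - ‖x t₁‖)) :=
      ((hyc.sub hxc.norm).tendsto t₁).mono_left nhdsWithin_le_nhds
    have h0 : (0:ℝ) ≤ y t₁ - ‖x t₁‖ := by
      refine ge_of_tendsto hten ?_
      filter_upwards [Ioo_mem_nhdsLT ht₀₁] with s hs
      exact sub_nonneg.2 (hIco s ⟨hs.1.le, hs.2⟩).le
    linarith
  have hle : ∀ r ∈ Set.Icc (t₀ - hb) t₁, ‖x r‖ ≤ y r := by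
    intro r hr
    rcases le_or_gt r t₀ with h | h
    · exact (hhist r ⟨hr.1, h⟩).le
    · rcases eq_or_lt_of_le hr.2 with h2 | h2
      · rw [h2]; exact ht₁le
      · exact (hIco r ⟨h.le, h2⟩).le
  have hgℓ : ∀ s ∈ Set.Icc t₀ t₁, ‖g s‖ ≤ ℓ s := by
    intro s hs
    refine (hLf s hs.1 _).trans (hLmono s _ _ fun i => ?_)
    refine hle _ ⟨?_, ?_⟩
    · have := hHle i s; linarith [hs.1]
    · have := hHnonneg i s; linarith [hs.2]
  have hExp : ‖w t₁‖ = Real.exp (I t₁) := hwp t₁ ht₁S.1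
  have hEpos : (0:ℝ) < ‖w t₁‖ := by rw [hExp]; exact Real.exp_pos _
  have hintle : (∫ s in t₀..t₁, ‖z s‖ * ‖g s‖) ≤ ∫ s in t₀..t₁, ‖z s‖ * ℓ s := by
    refine intervalIntegral.integral_mono_on ht₁S.1
      ((hzc.norm.mul hgc.norm).intervalIntegrable _ _)
      ((hzc.norm.mul hℓc).intervalIntegrable _ _) fun s hs => ?_
    exact mul_le_mul_of_nonneg_left (hgℓ s hs) (norm_nonneg _)
  have hy₀ : ‖x t₀‖ < y t₀ := hhist t₀ ht₀I
  have hfinal : ‖x t₁‖ < y t₁ := by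
    calc ‖x t₁‖ ≤ ‖w t₁‖ * (‖x t₀‖ + ∫ s in t₀..t₁, ‖z s‖ * ‖g s‖) := hx_bound t₁ ht₁S.1
      _ ≤ ‖w t₁‖ * (‖x t₀‖ + ∫ s in t₀..t₁, ‖z s‖ * ℓ s) :=
        mul_le_mul_of_nonneg_left (add_le_add_right hintle _) hEpos.le
      _ < ‖w t₁‖ * (y t₀ + ∫ s in t₀..t₁, ‖z s‖ * ℓ s) := by
        apply mul_lt_mul_of_pos_left _ hEpos
        linarith
      _ = y t₁ := by rw [hy_eq2 t₁ ht₁S.1, hExp]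
  exact absurd ht₁S.2 (not_le.2 hfinal)
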